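/- Let a, b be real numbers with b - a > 2. Consider the linear map Φ sending a finitely supported function f : ℤ → K with support contained in {x ∈ ℤ : a < x < b} to the pair (∑_{x∈ℤ} f(x), ∑_{x∈ℤ} x·f(x)) ∈ K². Then (i) Φ is surjective, and (ii) Φ(f) = (0,0) if and only if there exists a finitely supported g : ℤ → K with support contained in {x ∈ ℤ : a+1 < x < b-1} such that Q g = f. (In other words, Φ induces an isomorphism between the cokernel of Q : Map(ℤ∩(a+1,b-1),K) → Map(ℤ∩(a,b),K) and the two-dimensional space K·q ⊕ K·p.) -/

import Mathlib

/-- The discrete Laplace operator in dimension 1. -/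
def discreteLaplace {K : Type*} [Field K] (f : ℤ → K) : ℤ → K :=
  fun x => f (x - 1) - 2 * f x + f (x + 1)

private lemma lap_step {K : Type*} [Field K] (φ : ℤ → K) (m x : ℤ) :
    (∑ y ∈ Finset.Icc m (x-2), ((x:K)-1-(y:K))*φ y)
      - 2*(∑ y ∈ Finset.Icc m (x-1), ((x:K)-(y:K))*φ y)
      + (∑ y ∈ Finset.Icc m x, ((x:K)+1-(y:K))*φ y)
      = if m ≤ x then φ x else 0 := by
  have h1 : (∑ y ∈ Finset.Icc m (x-2), ((x:K)-1-(y:K))*φ y)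
      = ∑ y ∈ Finset.Icc m x, (if y ≤ x-2 then ((x:K)-1-(y:K))*φ y else 0) := by
    rw [Finset.sum_congr rfl (g := fun y => if y ≤ x-2 then ((x:K)-1-(y:K))*φ y else 0)
      (by intro y hy; simp only [Finset.mem_Icc] at hy; exact (if_pos (by omega)).symm)]
    exact Finset.sum_subset (by intro y hy; simp only [Finset.mem_Icc] at *; omega)
      (by intro y hy hy'; simp only [Finset.mem_Icc] at hy hy'; rw [if_neg (by omega)])
  have h2 : (∑ y ∈ Finset.Icc m (x-1), ((x:K)-(y:K))*φ y)
      = ∑ y ∈ Finset.Icc m x, (if y ≤ x-1 then ((x:K)-(y:K))*φ y else 0) := by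
    rw [Finset.sum_congr rfl (g := fun y => if y ≤ x-1 then ((x:K)-(y:K))*φ y else 0)
      (by intro y hy; simp only [Finset.mem_Icc] at hy; exact (if_pos (by omega)).symm)]
    exact Finset.sum_subset (by intro y hy; simp only [Finset.mem_Icc] at *; omega)
      (by intro y hy hy'; simp only [Finset.mem_Icc] at hy hy'; rw [if_neg (by omega)])
  rw [h1, h2, Finset.mul_sum, ← Finset.sum_sub_distrib, ← Finset.sum_add_distrib]
  have h3 : ∀ y ∈ Finset.Icc m x,
      ((if y ≤ x-2 then ((x:K)-1-(y:K))*φ y else 0)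
        - 2*(if y ≤ x-1 then ((x:K)-(y:K))*φ y else 0)
        + ((x:K)+1-(y:K))*φ y)
      = if y = x then φ y else 0 := by
    intro y hy
    simp only [Finset.mem_Icc] at hy
    rcases eq_or_ne y x with rfl | hne
    · rw [if_neg (by omega), if_neg (by omega), if_pos rfl]; ring
    · rcases eq_or_ne y (x-1) with rfl | hne2
      · rw [if_neg (by omega), if_pos (by omega), if_neg hne]
        push_cast; ring
      · rw [if_pos (by omega), if_pos (by omega), if_neg hne]; ring
  rw [Finset.sum_congr rfl h3, Finset.sum_ite_eq' (Finset.Icc m x) x φ]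
  simp [Finset.mem_Icc]

/-- For `b - a > 2`, the map `f ↦ (∑ₓ f(x), ∑ₓ x·f(x))` on functions supported in
`ℤ ∩ (a, b)` is surjective, and its kernel is exactly the image of the discrete
Laplace operator applied to functions supported in `ℤ ∩ (a+1, b-1)`.  In other
words it identifies the cokernel of `Q : Map(ℤ∩(a+1,b-1),K) → Map(ℤ∩(a,b),K)`
with `K·q ⊕ K·p`. -/
theorem discreteLaplace_cokernel_iso
    {K : Type*} [Field K] [CharZero K]
    (a b : ℝ) (hab : b - a > 2) :
    (∀ c d : K, ∃ f : ℤ → K,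
      Function.support f ⊆ {x : ℤ | a < (x : ℝ) ∧ (x : ℝ) < b} ∧
      (∑ᶠ x : ℤ, f x) = c ∧ (∑ᶠ x : ℤ, (x : K) * f x) = d) ∧
    (∀ f : ℤ → K,
      Function.support f ⊆ {x : ℤ | a < (x : ℝ) ∧ (x : ℝ) < b} →
      (((∑ᶠ x : ℤ, f x) = 0 ∧ (∑ᶠ x : ℤ, (x : K) * f x) = 0) ↔
        ∃ g : ℤ → K,
          Function.support g ⊆ {x : ℤ | a + 1 < (x : ℝ) ∧ (x : ℝ) < b - 1} ∧
          discreteLaplace g = f)) := by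
  set m : ℤ := ⌊a⌋ + 1 with hm_def
  set M : ℤ := ⌈b⌉ - 1 with hM_def
  have hma : a < (m:ℝ) := by
    have := Int.lt_floor_add_one a; rw [hm_def]; push_cast; linarith
  have hma' : (m:ℝ) ≤ a + 1 := by
    have := Int.floor_le a; rw [hm_def]; push_cast; linarith
  have hMb : (M:ℝ) < b := by
    have := Int.ceil_lt_add_one b; rw [hM_def]; push_cast; linarith
  have hMb' : b - 1 ≤ (M:ℝ) := by
    have := Int.le_ceil b; rw [hM_def]; push_cast; linarith
  constructor
  · -- surjectivity
    intro c d
    refine ⟨fun x => if x = m then ((m:K)+1)*c - d else if x = m+1 then d - (m:K)*c else 0,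
      ?_, ?_, ?_⟩
    · intro x hx
      simp only [Function.mem_support] at hx
      simp only [Set.mem_setOf_eq]
      rcases eq_or_ne x m with rfl | h1
      · exact ⟨hma, by push_cast; linarith⟩
      rcases eq_or_ne x (m+1) with rfl | h2
      · constructor
        · push_cast; linarith
        · push_cast; linarith
      · exact absurd (by simp [h1, h2]) hx
    · rw [finsum_eq_sum_of_support_subset _
        (s := ({m, m+1} : Finset ℤ)) (by
          intro x hx
          simp only [Function.mem_support] at hx
          by_contra hc
          simp only [Finset.coe_insert, Finset.coe_singleton, Set.mem_insert_iff,
            Set.mem_singleton_iff, not_or] at hc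
          exact hx (by simp [hc.1, hc.2]))]
      rw [Finset.sum_pair (by omega)]
      have hne : m + 1 ≠ m := by omega
      simp [hne]
      ring
    · rw [finsum_eq_sum_of_support_subset _
        (s := ({m, m+1} : Finset ℤ)) (by
          intro x hx
          simp only [Function.mem_support] at hx
          by_contra hc
          simp only [Finset.coe_insert, Finset.coe_singleton, Set.mem_insert_iff,
            Set.mem_singleton_iff, not_or] at hc
          exact hx (by simp [hc.1, hc.2]))]
      rw [Finset.sum_pair (by omega)]
      have hne : m + 1 ≠ m := by omega
      simp [hne]
      push_cast
      ring
  · intro f hf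
    have hb : ∀ x : ℤ, f x ≠ 0 → m ≤ x ∧ x ≤ M := by
      intro x hx
      obtain ⟨h1, h2⟩ := hf hx
      constructor
      · have := Int.floor_lt.mpr h1; omega
      · have := Int.lt_ceil.mpr h2; omega
    have hfin : Function.support f ⊆ ↑(Finset.Icc m M) := by
      intro x hx
      simp only [Finset.coe_Icc, Set.mem_Icc]
      exact hb x hx
    constructor
    · rintro ⟨h0, h1⟩
      have hc : ∑ y ∈ Finset.Icc m M, f y = 0 := by
        rw [← finsum_eq_sum_of_support_subset f hfin]; exact h0
      have hd : ∑ y ∈ Finset.Icc m M, (y:K) * f y = 0 := by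
        rw [← finsum_eq_sum_of_support_subset _
          (Set.Subset.trans (Function.support_mul_subset_right _ _) hfin)]
        exact h1
      refine ⟨fun t => ∑ y ∈ Finset.Icc m (t-1), ((t:K)-(y:K)) * f y, ?_, ?_⟩
      · -- support of g
        intro x hx
        simp only [Function.mem_support] at hx
        simp only [Set.mem_setOf_eq]
        by_contra hcon
        apply hx
        rcases not_and_or.mp hcon with hle | hge
        · -- x ≤ a + 1 : empty sum
          push_neg at hle
          have hxm : x ≤ m := by
            have : ((x:ℤ):ℝ) - 1 ≤ a := by push_cast; linarith
            have := Int.le_floor.mpr (by push_cast at this ⊢; linarith : ((x - 1 : ℤ):ℝ) ≤ a)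
            omega
          rw [Finset.Icc_eq_empty (by omega)]
          exact Finset.sum_empty
        · -- x ≥ b - 1 : full sum, which vanishes
          push_neg at hge
          have key : (∑ y ∈ Finset.Icc m (x-1), ((x:K)-(y:K)) * f y)
              = ∑ y ∈ Finset.Icc m M, ((x:K)-(y:K)) * f y := by
            have vanish : ∀ y : ℤ, x - 1 < y → ((x:K)-(y:K)) * f y = 0 := by
              intro y hy
              rcases eq_or_ne (f y) 0 with h | h
              · rw [h, mul_zero]
              · have hyb : (y:ℝ) < b := (hf h).2
                have : (y:ℝ) < (x:ℝ) + 1 := by linarith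
                have : y < x + 1 := by exact_mod_cast this
                have : y = x := by omega
                subst this; simp
            have e1 : (∑ y ∈ Finset.Icc m (x-1), ((x:K)-(y:K)) * f y)
                = ∑ y ∈ Finset.Icc m (max (x-1) M), ((x:K)-(y:K)) * f y := by
              apply Finset.sum_subset
              · intro y hy; simp only [Finset.mem_Icc] at *
                exact ⟨hy.1, le_trans hy.2 (le_max_left _ _)⟩
              · intro y hy hy'
                simp only [Finset.mem_Icc] at hy hy'
                rcases eq_or_ne (f y) 0 with h | h
                · rw [h, mul_zero]
                · exact vanish y (by omega)
            have e2 : (∑ y ∈ Finset.Icc m M, ((x:K)-(y:K)) * f y)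
                = ∑ y ∈ Finset.Icc m (max (x-1) M), ((x:K)-(y:K)) * f y := by
              apply Finset.sum_subset
              · intro y hy; simp only [Finset.mem_Icc] at *
                exact ⟨hy.1, le_trans hy.2 (le_max_right _ _)⟩
              · intro y hy hy'
                simp only [Finset.mem_Icc] at hy hy'
                rcases eq_or_ne (f y) 0 with h | h
                · rw [h, mul_zero]
                · exact absurd (hb y h).2 (by omega)
            rw [e1, e2]
          rw [key]
          have expand : (∑ y ∈ Finset.Icc m M, ((x:K)-(y:K)) * f y)
              = (x:K) * (∑ y ∈ Finset.Icc m M, f y) - ∑ y ∈ Finset.Icc m M, (y:K) * f y := by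
            rw [Finset.mul_sum, ← Finset.sum_sub_distrib]
            exact Finset.sum_congr rfl (fun y _ => by ring)
          rw [expand, hc, hd]
          ring
      · -- discreteLaplace g = f
        funext x
        simp only [discreteLaplace]
        have e1 : x - 1 - 1 = x - 2 := by ring
        have e2 : x + 1 - 1 = x := by ring
        rw [e1, e2]
        push_cast
        rw [lap_step f m x]
        rcases le_or_gt m x with h | h
        · rw [if_pos h]
        · rw [if_neg (not_le.mpr h)]
          by_contra hne
          exact absurd (hb x (Ne.symm hne)).1 (by omega)
    · rintro ⟨g, hg, rfl⟩
      have hbg : ∀ x : ℤ, g x ≠ 0 → m ≤ x ∧ x ≤ M := by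
        intro x hx
        obtain ⟨h1, h2⟩ := hg hx
        constructor
        · have := Int.floor_lt.mpr (by linarith : a < (x:ℝ)); omega
        · have := Int.lt_ceil.mpr (by linarith : (x:ℝ) < b); omega
      have key : ∀ h : ℤ → K,
          (∀ x, h x ≠ 0 → g (x-1) ≠ 0 ∨ g x ≠ 0 ∨ g (x+1) ≠ 0) →
          (Function.support h).Finite := by
        intro h hh
        apply Set.Finite.subset (Set.finite_Icc (m-1) (M+1))
        intro x hx
        rcases hh x hx with h' | h' | h' <;>
          · have := hbg _ h'; simp only [Set.mem_Icc]; omega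
      have hgfin : (Function.support g).Finite :=
        key g (fun x hx => Or.inr (Or.inl hx))
      have fin1 : (Function.support fun x => g (x-1)).Finite :=
        key _ (fun x hx => Or.inl hx)
      have fin2 : (Function.support fun x => 2 * g x).Finite :=
        key _ (fun x hx => Or.inr (Or.inl (by intro h; apply hx; rw [h, mul_zero])))
      have fin3 : (Function.support fun x => g (x+1)).Finite :=
        key _ (fun x hx => Or.inr (Or.inr hx))
      have fin12 : (Function.support fun x => g (x-1) - 2 * g x).Finite := by
        apply key
        intro x hx
        by_contra hcon
        push_neg at hcon
        obtain ⟨u1, u2, _⟩ := hcon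
        exact hx (by simp [u1, u2])
      have shift1 : (∑ᶠ x : ℤ, g (x-1)) = ∑ᶠ x : ℤ, g x :=
        finsum_comp_equiv (Equiv.subRight (1:ℤ)) (f := g)
      have shift2 : (∑ᶠ x : ℤ, g (x+1)) = ∑ᶠ x : ℤ, g x :=
        finsum_comp_equiv (Equiv.addRight (1:ℤ)) (f := g)
      constructor
      · -- total sum vanishes
        calc (∑ᶠ x : ℤ, discreteLaplace g x)
            = ∑ᶠ x : ℤ, ((g (x-1) - 2 * g x) + g (x+1)) := by
              apply finsum_congr; intro x; rfl
          _ = (∑ᶠ x : ℤ, (g (x-1) - 2 * g x)) + ∑ᶠ x : ℤ, g (x+1) :=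
              finsum_add_distrib fin12 fin3
          _ = ((∑ᶠ x : ℤ, g (x-1)) - ∑ᶠ x : ℤ, 2 * g x) + ∑ᶠ x : ℤ, g (x+1) := by
              rw [finsum_sub_distrib fin1 fin2]
          _ = 0 := by
              rw [shift1, shift2, ← mul_finsum g 2]
              ring
      · -- first moment vanishes
        have finx1 : (Function.support fun x : ℤ => (x:K) * g (x-1)).Finite :=
          key _ (fun x hx => Or.inl (by intro h; apply hx; simp [h]))
        have finx2 : (Function.support fun x : ℤ => 2 * ((x:K) * g x)).Finite :=
          key _ (fun x hx => Or.inr (Or.inl (by intro h; apply hx; simp [h])))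
        have finx3 : (Function.support fun x : ℤ => (x:K) * g (x+1)).Finite :=
          key _ (fun x hx => Or.inr (Or.inr (by intro h; apply hx; simp [h])))
        have finx12 : (Function.support fun x : ℤ => (x:K) * g (x-1) - 2 * ((x:K) * g x)).Finite :=
          key _ (fun x hx => by
            by_contra hcon
            push_neg at hcon
            obtain ⟨u1, u2, _⟩ := hcon
            exact hx (by simp [u1, u2]))
        have finxg : (Function.support fun x : ℤ => (x:K) * g x).Finite :=
          key _ (fun x hx => Or.inr (Or.inl (by intro h; apply hx; simp [h])))
        have B1 : (∑ᶠ x : ℤ, (x:K) * g (x-1)) = ∑ᶠ x : ℤ, ((x:K)+1) * g x := by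
          have := finsum_comp_equiv (Equiv.subRight (1:ℤ))
            (f := fun x => ((x:K)+1) * g x)
          rw [← this]
          apply finsum_congr; intro x
          simp only [Equiv.subRight_apply]
          push_cast
          ring
        have B3 : (∑ᶠ x : ℤ, (x:K) * g (x+1)) = ∑ᶠ x : ℤ, ((x:K)-1) * g x := by
          have := finsum_comp_equiv (Equiv.addRight (1:ℤ))
            (f := fun x => ((x:K)-1) * g x)
          rw [← this]
          apply finsum_congr; intro x
          simp only [Equiv.coe_addRight]
          push_cast
          ring
        have C1 : (∑ᶠ x : ℤ, ((x:K)+1) * g x)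
            = (∑ᶠ x : ℤ, (x:K) * g x) + ∑ᶠ x : ℤ, g x := by
          rw [← finsum_add_distrib finxg hgfin]
          apply finsum_congr; intro x; ring
        have C3 : (∑ᶠ x : ℤ, ((x:K)-1) * g x)
            = (∑ᶠ x : ℤ, (x:K) * g x) - ∑ᶠ x : ℤ, g x := by
          rw [← finsum_sub_distrib finxg hgfin]
          apply finsum_congr; intro x; ring
        calc (∑ᶠ x : ℤ, (x:K) * discreteLaplace g x)
            = ∑ᶠ x : ℤ, (((x:K) * g (x-1) - 2 * ((x:K) * g x)) + (x:K) * g (x+1)) := by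
              apply finsum_congr; intro x; simp only [discreteLaplace]; ring
          _ = (∑ᶠ x : ℤ, ((x:K) * g (x-1) - 2 * ((x:K) * g x))) + ∑ᶠ x : ℤ, (x:K) * g (x+1) :=
              finsum_add_distrib finx12 finx3
          _ = ((∑ᶠ x : ℤ, (x:K) * g (x-1)) - ∑ᶠ x : ℤ, 2 * ((x:K) * g x))
                + ∑ᶠ x : ℤ, (x:K) * g (x+1) := by
              rw [finsum_sub_distrib finx1 finx2]
          _ = 0 := by
              rw [B1, B3, C1, C3, ← mul_finsum _ 2]
              ring
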